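/- Fix integers g, n ≥ 0 with 2g − 2 + n > 0. Then log E_{k+1}(g,n) = O(k·log k) as k → ∞; that is, there exists a constant C > 0 such that |log E_{k+1}(g,n)| ≤ C·k·log k for every integer k ≥ 2. -/

import Mathlib

open Real Complex Finset

/-- `ζ′(−1)`, as a real number (the derivative of the Riemann zeta function at `−1`
is real, so we take the real part). -/
noncomputable def zetaDerivNegOne : ℝ := (deriv riemannZeta (-1)).re

/-- The constant `E_{k+1}(g,n)`, for an integer `k ≥ 1`:
`E_{k+1}(g,n) = 2^{((3k+1)(g−1)−n)/3} · ((2k)!·π^{2k+1})^{−n/2} ·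
  exp((2g−2+n)·(2ζ′(−1) − (k+1/2)² + (k+1/2)·log(2π) + Σ_{j=1}^{2k}(j−k−1/2)·log j))`. -/
noncomputable def Ek (k g n : ℕ) : ℝ :=
  (2 : ℝ) ^ (((3 * (k : ℝ) + 1) * ((g : ℝ) - 1) - n) / 3) *
    ((Nat.factorial (2 * k) : ℝ) * Real.pi ^ (2 * k + 1)) ^ (-(n : ℝ) / 2) *
    Real.exp ((2 * (g : ℝ) - 2 + n) *
      (2 * zetaDerivNegOne - ((k : ℝ) + 1 / 2) ^ 2 + ((k : ℝ) + 1 / 2) * Real.log (2 * Real.pi)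
        + ∑ j ∈ Finset.Icc 1 (2 * k), ((j : ℝ) - (k : ℝ) - 1 / 2) * Real.log j))

lemma monoOn_log (b : ℝ) : MonotoneOn Real.log (Set.Icc (1:ℝ) b) :=
  fun x hx _ _ hxy => Real.log_le_log (by linarith [hx.1]) hxy

lemma monoOn_xlogx (b : ℝ) : MonotoneOn (fun x : ℝ => x * Real.log x) (Set.Icc (1:ℝ) b) := by
  intro x hx y hy hxy
  have h1 : (1:ℝ) ≤ x := hx.1
  have := Real.log_le_log (by linarith) hxy
  have hlx : 0 ≤ Real.log x := Real.log_nonneg h1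
  dsimp only
  nlinarith

lemma int_xlogx {b : ℝ} (hb : 1 ≤ b) :
    ∫ x in (1:ℝ)..b, x * Real.log x = b^2/2 * Real.log b - b^2/4 + 1/4 := by
  have h : ∀ x ∈ Set.uIcc (1:ℝ) b, HasDerivAt (fun t : ℝ => t^2/2 * Real.log t - t^2/4)
      (x * Real.log x) x := by
    intro x hx
    rw [Set.uIcc_of_le hb] at hx
    have hx1 : (1:ℝ) ≤ x := hx.1
    have hx0 : x ≠ 0 := by linarith
    have h1 : HasDerivAt (fun t : ℝ => t^2/2) x x := by
      simpa using ((hasDerivAt_pow 2 x).div_const 2)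
    have h2 : HasDerivAt Real.log x⁻¹ x := Real.hasDerivAt_log hx0
    have h3 : HasDerivAt (fun t : ℝ => t^2/2 * Real.log t) (x * Real.log x + x^2/2 * x⁻¹) x :=
      h1.mul h2
    have h4 : HasDerivAt (fun t : ℝ => t^2/4) (x/2) x := by
      have := (hasDerivAt_pow 2 x).div_const 4
      exact this.congr_deriv (by norm_num; ring)
    have := h3.sub h4
    exact this.congr_deriv (by field_simp; ring)
  have hint : IntervalIntegrable (fun x : ℝ => x * Real.log x) MeasureTheory.volume 1 b := by
    apply ContinuousOn.intervalIntegrable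
    apply ContinuousOn.mul continuousOn_id
    apply Real.continuousOn_log.mono
    intro x hx
    rw [Set.uIcc_of_le hb] at hx
    simp only [Set.mem_compl_iff, Set.mem_singleton_iff]
    intro h; rw [h] at hx; linarith [hx.1]
  rw [intervalIntegral.integral_eq_sub_of_hasDerivAt h hint]
  norm_num

lemma sumlog_ub {m : ℕ} (hm : 1 ≤ m) :
    ∑ j ∈ Icc 1 m, Real.log j ≤ ((m:ℝ)+1) * Real.log ((m:ℝ)+1) - m := by
  have h := MonotoneOn.sum_le_integral_Ico (f := Real.log) (a := 1) (b := m + 1)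
    (by omega) (by exact_mod_cast monoOn_log _)
  rw [show Finset.Ico 1 (m+1) = Finset.Icc 1 m from rfl] at h
  have hint : ∫ x in ((1:ℕ):ℝ)..((m+1 : ℕ):ℝ), Real.log x
      = ((m:ℝ)+1) * Real.log ((m:ℝ)+1) - m := by
    push_cast
    rw [integral_log]
    simp [Real.log_one]; ring
  calc ∑ j ∈ Icc 1 m, Real.log j ≤ _ := h
    _ = _ := hint

lemma sumlog_lb {m : ℕ} (hm : 1 ≤ m) :
    (m:ℝ) * Real.log m - m + 1 ≤ ∑ j ∈ Icc 1 m, Real.log j := by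
  have h := MonotoneOn.integral_le_sum_Ico (f := Real.log) (a := 1) (b := m)
    (by omega) (by exact_mod_cast monoOn_log _)
  have hint : ∫ x in ((1:ℕ):ℝ)..((m : ℕ):ℝ), Real.log x = (m:ℝ) * Real.log m - m + 1 := by
    push_cast
    rw [integral_log]
    simp [Real.log_one]
  rw [hint] at h
  refine h.trans ?_
  -- ∑ x ∈ Ico 1 m, log (x+1) ≤ ∑ j ∈ Icc 1 m, log j
  have : ∑ x ∈ Finset.Ico 1 m, Real.log ((x:ℕ) + 1 : ℕ) = ∑ j ∈ Finset.Icc 2 m, Real.log j := by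
    rw [show Finset.Icc 2 m = Finset.Ico 2 (m+1) from rfl]
    rw [← Finset.sum_Ico_add' (fun j => Real.log (j : ℕ)) 1 m 1]
  rw [this]
  apply Finset.sum_le_sum_of_subset_of_nonneg
  · intro x hx; simp at hx ⊢; omega
  · intro i hi _
    simp at hi
    exact Real.log_nonneg (by exact_mod_cast hi.1)

lemma sumxlogx_ub {m : ℕ} (hm : 1 ≤ m) :
    ∑ j ∈ Icc 1 m, (j:ℝ) * Real.log j
      ≤ ((m:ℝ)+1)^2/2 * Real.log ((m:ℝ)+1) - ((m:ℝ)+1)^2/4 + 1/4 := by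
  have h := MonotoneOn.sum_le_integral_Ico (f := fun x => x * Real.log x) (a := 1) (b := m + 1)
    (by omega) (by exact_mod_cast monoOn_xlogx _)
  rw [show Finset.Ico 1 (m+1) = Finset.Icc 1 m from rfl] at h
  refine le_trans (by exact_mod_cast h) ?_
  simp only [Nat.cast_one, Nat.cast_add]
  rw [int_xlogx (by linarith [Nat.cast_nonneg (α := ℝ) m])]

lemma sumxlogx_lb {m : ℕ} (hm : 1 ≤ m) :
    (m:ℝ)^2/2 * Real.log m - (m:ℝ)^2/4 + 1/4 ≤ ∑ j ∈ Icc 1 m, (j:ℝ) * Real.log j := by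
  have h := MonotoneOn.integral_le_sum_Ico (f := fun x => x * Real.log x) (a := 1) (b := m)
    (by omega) (by exact_mod_cast monoOn_xlogx _)
  rw [show (((1:ℕ)):ℝ) = (1:ℝ) by norm_num] at h
  rw [int_xlogx (by exact_mod_cast hm)] at h
  refine h.trans ?_
  have : ∑ x ∈ Finset.Ico 1 m, ((((x+1:ℕ)):ℝ) * Real.log ((x+1:ℕ):ℝ))
      = ∑ j ∈ Finset.Icc 2 m, ((j:ℝ) * Real.log j) := by
    rw [show Finset.Icc 2 m = Finset.Ico 2 (m+1) from rfl]
    rw [← Finset.sum_Ico_add' (fun j => ((j:ℕ):ℝ) * Real.log ((j:ℕ):ℝ)) 1 m 1]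
  rw [this]
  apply Finset.sum_le_sum_of_subset_of_nonneg
  · intro x hx; simp at hx ⊢; omega
  · intro i hi _
    simp at hi
    have h1 : (1:ℝ) ≤ (i:ℝ) := by exact_mod_cast hi.1
    have := Real.log_nonneg h1
    positivity

lemma tail_lower (A K lk l2 : ℝ) (hA : 0 ≤ A) (hK : 2 ≤ K) (hlk : 0.69 ≤ lk)
    (hl2 : 0 ≤ l2) (hl2lk : l2 ≤ lk) (hKlk : 1 ≤ K*lk) :
    2*A + (4*K+1)/2 * (l2+lk) + 2*K ≤ (8*A+20)*K*lk := by
  nlinarith [mul_nonneg hA (show (0:ℝ) ≤ K*lk - 1 by linarith),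
    mul_nonneg (show (0:ℝ) ≤ lk by linarith) (show (0:ℝ) ≤ K - 2 by linarith),
    mul_nonneg (show (0:ℝ) ≤ K by linarith) (show (0:ℝ) ≤ lk - l2 by linarith),
    mul_nonneg (show (0:ℝ) ≤ K by linarith) (show (0:ℝ) ≤ lk - 0.69 by linarith)]

lemma tail_upper (A K lk l2 : ℝ) (hA : 0 ≤ A) (hK : 2 ≤ K) (hlk : 0.69 ≤ lk)
    (hl2 : 0 ≤ l2) (hl2lk : l2 ≤ lk) (hKlk : 1 ≤ K*lk) :
    2*A + (K+1/2)*2.1 + (2*K+1)/2 * (l2+lk) ≤ (8*A+20)*K*lk := by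
  nlinarith [mul_nonneg hA (show (0:ℝ) ≤ K*lk - 1 by linarith),
    mul_nonneg (show (0:ℝ) ≤ lk by linarith) (show (0:ℝ) ≤ K - 2 by linarith),
    mul_nonneg (show (0:ℝ) ≤ K by linarith) (show (0:ℝ) ≤ lk - l2 by linarith),
    mul_nonneg (show (0:ℝ) ≤ K by linarith) (show (0:ℝ) ≤ lk - 0.69 by linarith)]

set_option maxHeartbeats 1000000 in
lemma bracket_bound (Z : ℝ) (k : ℕ) (hk : 2 ≤ k) :
    |2*Z - ((k:ℝ)+1/2)^2 + ((k:ℝ)+1/2) * Real.log (2*Real.pi)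
      + ∑ j ∈ Finset.Icc 1 (2*k), ((j:ℝ) - (k:ℝ) - 1/2) * Real.log j|
      ≤ (8*|Z|+20) * k * Real.log k := by
  set K : ℝ := (k:ℝ) with hKdef
  have hK : (2:ℝ) ≤ K := by rw [hKdef]; exact_mod_cast hk
  have hKpos : (0:ℝ) < K := by linarith
  -- split the sum
  have hsplit : ∑ j ∈ Finset.Icc 1 (2*k), ((j:ℝ) - K - 1/2) * Real.log j
      = (∑ j ∈ Finset.Icc 1 (2*k), (j:ℝ) * Real.log j)
        - (K + 1/2) * ∑ j ∈ Finset.Icc 1 (2*k), Real.log j := by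
    rw [Finset.mul_sum, ← Finset.sum_sub_distrib]
    exact Finset.sum_congr rfl fun j _ => by ring
  set Q := ∑ j ∈ Finset.Icc 1 (2*k), (j:ℝ) * Real.log j with hQdef
  set L := ∑ j ∈ Finset.Icc 1 (2*k), Real.log j with hLdef
  rw [hsplit]
  have hmcast : ((2*k : ℕ) : ℝ) = 2*K := by push_cast; ring
  have hm : 1 ≤ 2*k := by omega
  have hQub : Q ≤ (2*K+1)^2/2 * Real.log (2*K+1) - (2*K+1)^2/4 + 1/4 := by
    have := sumxlogx_ub hm; rw [hmcast] at this; exact this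
  have hQlb : (2*K)^2/2 * Real.log (2*K) - (2*K)^2/4 + 1/4 ≤ Q := by
    have := sumxlogx_lb hm; rw [hmcast] at this; exact this
  have hLub : L ≤ (2*K+1) * Real.log (2*K+1) - 2*K := by
    have := sumlog_ub hm; rw [hmcast] at this; exact this
  have hLlb : 2*K * Real.log (2*K) - 2*K + 1 ≤ L := by
    have := sumlog_lb hm; rw [hmcast] at this; exact this
  -- log facts
  set v := Real.log (2*K) with hvdef
  set u := Real.log (2*K+1) with hudef
  set lk := Real.log K with hlkdef
  have hv : v = Real.log 2 + lk := Real.log_mul (by norm_num) (ne_of_gt hKpos)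
  have hl2lb : (0.6931:ℝ) ≤ Real.log 2 := by linarith [Real.log_two_gt_d9]
  have hl2ub : Real.log 2 ≤ (0.6932:ℝ) := by linarith [Real.log_two_lt_d9]
  have hlklb : Real.log 2 ≤ lk := Real.log_le_log (by norm_num) hK
  have hlkub : lk ≤ K := (Real.log_le_sub_one_of_pos hKpos).trans (by linarith)
  have hu_le : u ≤ v + 1/(2*K) := by
    have h0 : Real.log ((2*K+1)/(2*K)) ≤ (2*K+1)/(2*K) - 1 :=
      Real.log_le_sub_one_of_pos (by positivity)
    rw [Real.log_div (by positivity) (by positivity)] at h0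
    have : (2*K+1)/(2*K) - 1 = 1/(2*K) := by field_simp; ring
    rw [this] at h0
    linarith
  have hu_scaled : (2*K+1)^2/2 * u ≤ (2*K+1)^2/2 * v + 2*K := by
    have h1 : (2*K+1)^2/2 * u ≤ (2*K+1)^2/2 * (v + 1/(2*K)) :=
      mul_le_mul_of_nonneg_left hu_le (by positivity)
    have h2 : (2*K+1)^2/2 * (1/(2*K)) ≤ 2*K := by
      rw [show (2*K+1)^2/2 * (1/(2*K)) = (2*K+1)^2/(4*K) by ring,
        div_le_iff₀ (by positivity)]
      nlinarith
    nlinarith [h1, h2]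
  -- upper bound on Q - cL - c^2
  have hA : Q - (K+1/2)*L - (K+1/2)^2 ≤ (2*K+1)/2 * v := by
    have h3 := mul_le_mul_of_nonneg_left hLlb (show (0:ℝ) ≤ K+1/2 by linarith)
    linarith [hQub, hu_scaled, h3]
  -- lower bound
  have hB : -(Q - (K+1/2)*L - (K+1/2)^2) ≤ (4*K+1)/2 * v + 2*K := by
    have h3 := mul_le_mul_of_nonneg_left hLub (show (0:ℝ) ≤ K+1/2 by linarith)
    linarith [hQlb, hu_scaled, h3]
  -- bound on log(2π)
  have hw_ub : Real.log (2*Real.pi) ≤ 2.1 := by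
    have h1 : Real.log (2*Real.pi) ≤ Real.log 8 :=
      Real.log_le_log (by positivity) (by nlinarith [Real.pi_le_four])
    have h8 : Real.log 8 = 3 * Real.log 2 := by
      rw [show (8:ℝ) = 2^3 by norm_num, Real.log_pow]; push_cast; ring
    rw [h8] at h1; linarith
  have hw_lb : (0:ℝ) ≤ Real.log (2*Real.pi) :=
    Real.log_nonneg (by nlinarith [Real.pi_gt_three])
  have hA' : |Z| ≥ 0 := abs_nonneg Z
  have hZ1 : Z ≤ |Z| := le_abs_self Z
  have hZ2 : -Z ≤ |Z| := neg_le_abs Z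
  have hKlk : (1:ℝ) ≤ K * lk := by nlinarith
  rw [abs_le]
  constructor
  · -- lower:  -(C k lk) ≤ expr
    rw [neg_le]
    have : -(2*Z - (K+1/2)^2 + (K+1/2) * Real.log (2*Real.pi) + (Q - (K+1/2)*L))
        ≤ 2*|Z| + (4*K+1)/2 * v + 2*K := by
      linarith [mul_nonneg (show (0:ℝ) ≤ K+1/2 by linarith) hw_lb, hB, hZ2]
    refine this.trans ?_
    rw [hv]
    exact tail_lower |Z| K lk (Real.log 2) hA' hK (by linarith) (by linarith) hlklb hKlk
  · have : 2*Z - (K+1/2)^2 + (K+1/2) * Real.log (2*Real.pi) + (Q - (K+1/2)*L)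
        ≤ 2*|Z| + (K+1/2)*2.1 + (2*K+1)/2 * v := by
      linarith [mul_le_mul_of_nonneg_left hw_ub (show (0:ℝ) ≤ K+1/2 by linarith), hA, hZ1]
    refine this.trans ?_
    rw [hv]
    have := tail_upper |Z| K lk (Real.log 2) hA' hK (by linarith) (by linarith) hlklb hKlk
    linarith

set_option maxHeartbeats 1000000 in
/-- Fix integers `g, n ≥ 0` with `2g − 2 + n > 0`.  Then
`log E_{k+1}(g,n) = O(k·log k)`: there is `C > 0` such that
`|log E_{k+1}(g,n)| ≤ C·k·log k` for every integer `k ≥ 2`. -/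
theorem log_Ek_bigO (g n : ℕ) (hgn : 2 * (g : ℤ) - 2 + n > 0) :
    ∃ C > (0 : ℝ), ∀ k : ℕ, 2 ≤ k →
      |Real.log (Ek k g n)| ≤ C * k * Real.log k := by
  set Z := zetaDerivNegOne with hZdef
  set G : ℝ := (g:ℝ)
  set N : ℝ := (n:ℝ)
  have hG : 0 ≤ G := Nat.cast_nonneg g
  have hN : 0 ≤ N := Nat.cast_nonneg n
  have hAZ : 0 ≤ |Z| := abs_nonneg Z
  refine ⟨(8*G+8+2*N) + 5*N + (2*G+N)*(8*|Z|+20) + 1, by positivity, ?_⟩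
  intro k hk
  set K : ℝ := (k:ℝ) with hKdef
  have hK : (2:ℝ) ≤ K := by rw [hKdef]; exact_mod_cast hk
  have hKpos : (0:ℝ) < K := by linarith
  set lk := Real.log K with hlkdef
  have hl2lb : (0.6931:ℝ) ≤ Real.log 2 := by linarith [Real.log_two_gt_d9]
  have hl2ub : Real.log 2 ≤ (0.6932:ℝ) := by linarith [Real.log_two_lt_d9]
  have hlklb : Real.log 2 ≤ lk := Real.log_le_log (by norm_num) hK
  have hlk : (0.69:ℝ) ≤ lk := by linarith
  have hcoef : (0:ℝ) < 2*G - 2 + N := by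
    have : ((2 * (g:ℤ) - 2 + n : ℤ) : ℝ) > 0 := by exact_mod_cast hgn
    push_cast at this; linarith
  -- positivity facts
  have hfacpos : (0:ℝ) < (Nat.factorial (2*k) : ℝ) := by
    exact_mod_cast (Nat.factorial_pos (2*k))
  have hXpos : (0:ℝ) < (Nat.factorial (2*k) : ℝ) * Real.pi ^ (2*k+1) := by positivity
  have h2rpos : (0:ℝ) < (2:ℝ) ^ (((3*K+1)*(G-1)-N)/3) :=
    Real.rpow_pos_of_pos (by norm_num) _
  have hbpos : (0:ℝ) < ((Nat.factorial (2*k) : ℝ) * Real.pi ^ (2*k+1)) ^ (-N/2) :=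
    Real.rpow_pos_of_pos hXpos _
  -- compute the log
  have hlog : Real.log (Ek k g n)
      = (((3*K+1)*(G-1)-N)/3) * Real.log 2
        + (-N/2) * Real.log ((Nat.factorial (2*k) : ℝ) * Real.pi ^ (2*k+1))
        + (2*G-2+N) *
          (2*Z - (K+1/2)^2 + (K+1/2) * Real.log (2*Real.pi)
            + ∑ j ∈ Finset.Icc 1 (2*k), ((j:ℝ) - K - 1/2) * Real.log j) := by
    rw [Ek, Real.log_mul (by positivity) (Real.exp_ne_zero _),
      Real.log_mul (ne_of_gt h2rpos) (ne_of_gt hbpos),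
      Real.log_rpow (by norm_num), Real.log_rpow hXpos, Real.log_exp]
  rw [hlog]
  -- bound term 1
  have hT1 : |(((3*K+1)*(G-1)-N)/3) * Real.log 2| ≤ (8*G+8+2*N) * (K*lk) := by
    rw [abs_mul, _root_.abs_of_nonneg (by linarith : (0:ℝ) ≤ Real.log 2)]
    have hr : |((3*K+1)*(G-1)-N)/3| ≤ (4*(G+1)+N)*K := by
      rw [abs_le]
      constructor <;>
        nlinarith [mul_nonneg hG (by linarith : (0:ℝ) ≤ K - 1),
          mul_nonneg hN (by linarith : (0:ℝ) ≤ K - 1),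
          mul_nonneg hG (by linarith : (0:ℝ) ≤ K),
          mul_nonneg hN (by linarith : (0:ℝ) ≤ K)]
    have := mul_le_mul hr hl2ub (by linarith) (by positivity)
    nlinarith [mul_nonneg (mul_nonneg hG hKpos.le) (by linarith : (0:ℝ) ≤ lk - 0.69),
      mul_nonneg (mul_nonneg hN hKpos.le) (by linarith : (0:ℝ) ≤ lk - 0.69),
      mul_nonneg hKpos.le (by linarith : (0:ℝ) ≤ lk - 0.69)]
  -- bound term 2
  have hlogpi : Real.log Real.pi ≤ 1.4 := by
    have h1 : Real.log Real.pi ≤ Real.log 4 := Real.log_le_log Real.pi_pos Real.pi_le_four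
    have h4 : Real.log 4 = 2 * Real.log 2 := by
      rw [show (4:ℝ) = 2^2 by norm_num, Real.log_pow]; push_cast; ring
    rw [h4] at h1; linarith
  have hlogpi0 : 0 ≤ Real.log Real.pi := Real.log_nonneg (by linarith [Real.pi_gt_three])
  have hlogfac : Real.log (Nat.factorial (2*k) : ℝ) ≤ 4*K*lk := by
    have h1 : (Nat.factorial (2*k) : ℝ) ≤ ((2*k : ℕ) : ℝ) ^ (2*k) := by
      exact_mod_cast Nat.factorial_le_pow (2*k)
    have h2 := Real.log_le_log hfacpos h1
    rw [Real.log_pow] at h2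
    have h3 : ((2*k : ℕ) : ℝ) = 2*K := by push_cast; ring
    rw [h3] at h2
    rw [Real.log_mul (by norm_num) (ne_of_gt hKpos)] at h2
    nlinarith [mul_nonneg hKpos.le (by linarith : (0:ℝ) ≤ lk - Real.log 2)]
  have hlogfac0 : 0 ≤ Real.log (Nat.factorial (2*k) : ℝ) :=
    Real.log_nonneg (by exact_mod_cast Nat.one_le_iff_ne_zero.mpr (Nat.factorial_ne_zero _))
  have hlogX : Real.log ((Nat.factorial (2*k) : ℝ) * Real.pi ^ (2*k+1))
      = Real.log (Nat.factorial (2*k) : ℝ) + (2*K+1) * Real.log Real.pi := by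
    rw [Real.log_mul (ne_of_gt hfacpos) (by positivity), Real.log_pow]
    push_cast; ring
  have hT2 : |(-N/2) * Real.log ((Nat.factorial (2*k) : ℝ) * Real.pi ^ (2*k+1))|
      ≤ 5*N * (K*lk) := by
    rw [abs_mul, hlogX]
    have habs1 : |(-N/2)| = N/2 := by rw [abs_of_nonpos (by linarith)]; ring
    have habs2 : |Real.log (Nat.factorial (2*k) : ℝ) + (2*K+1) * Real.log Real.pi|
        = Real.log (Nat.factorial (2*k) : ℝ) + (2*K+1) * Real.log Real.pi := by
      apply _root_.abs_of_nonneg; positivity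
    rw [habs1, habs2]
    have hpart : Real.log (Nat.factorial (2*k) : ℝ) + (2*K+1) * Real.log Real.pi
        ≤ 10 * (K*lk) := by
      nlinarith [mul_nonneg hKpos.le (by linarith : (0:ℝ) ≤ lk - 0.69),
        mul_le_mul_of_nonneg_left hlogpi (by linarith : (0:ℝ) ≤ 2*K+1)]
    nlinarith [mul_nonneg hKpos.le (by linarith : (0:ℝ) ≤ lk)]
  -- bound term 3
  have hbr := bracket_bound Z k hk
  have hT3 : |(2*G-2+N) *
      (2*Z - (K+1/2)^2 + (K+1/2) * Real.log (2*Real.pi)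
        + ∑ j ∈ Finset.Icc 1 (2*k), ((j:ℝ) - K - 1/2) * Real.log j)|
      ≤ (2*G+N)*(8*|Z|+20) * (K*lk) := by
    rw [abs_mul, abs_of_pos hcoef]
    calc (2*G-2+N) * |_| ≤ (2*G+N) * ((8*|Z|+20) * K * lk) := by
          apply mul_le_mul (by linarith) hbr (abs_nonneg _) (by linarith)
      _ = (2*G+N)*(8*|Z|+20) * (K*lk) := by ring
  -- combine
  have htri := abs_add_le
    ((((3*K+1)*(G-1)-N)/3) * Real.log 2
      + (-N/2) * Real.log ((Nat.factorial (2*k) : ℝ) * Real.pi ^ (2*k+1)))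
    ((2*G-2+N) *
      (2*Z - (K+1/2)^2 + (K+1/2) * Real.log (2*Real.pi)
        + ∑ j ∈ Finset.Icc 1 (2*k), ((j:ℝ) - K - 1/2) * Real.log j))
  have htri2 := abs_add_le ((((3*K+1)*(G-1)-N)/3) * Real.log 2)
    ((-N/2) * Real.log ((Nat.factorial (2*k) : ℝ) * Real.pi ^ (2*k+1)))
  have hKlk0 : 0 ≤ K * lk := by positivity
  calc _ ≤ _ := htri
    _ ≤ ((8*G+8+2*N) + 5*N + (2*G+N)*(8*|Z|+20)) * (K*lk) := by
        nlinarith [hT1, hT2, hT3, htri2]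
    _ ≤ ((8*G+8+2*N) + 5*N + (2*G+N)*(8*|Z|+20) + 1) * K * lk := by nlinarith
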